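/- Let 0 < θ ≤ 1/2 and define p : ℝ → ℝ by p(x) = min{x/θ, 1}. Let λ > 0, let ρ be a real number with 1 − θ < ρ < 1, let S be a finite set, and let ρ_j ∈ [0, 1−θ] for each j ∈ S with ∑_{j∈S} ρ_j = ρ. Then there exist nonnegative reals (λ_j)_{j∈S} and (ρ_{jk})_{j,k∈S} such that: ∑_{j∈S} λ_j = λ; for each j ∈ S, ∑_{k∈S} ρ_{jk} = ρ and ρ_{jj} = 1 − θ and ∑_{k∈S} λ_k · ρ_{kj} = λ · ρ_j; and for each j ∈ S, λ_j ≥ λ · max{ (p(ρ) − p(ρ − ρ_j)) / (p(ρ) − p(ρ − 1 + θ)), (ρ_j − ρ + 1 − θ) / (2 − 2θ − ρ) }. -/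

import Mathlib

open Finset

lemma sum_ite_ne {S : Type*} [Fintype S] [DecidableEq S] (k : S) (g : S → ℝ) :
    ∑ j, (if k = j then (0:ℝ) else g j) = (∑ j, g j) - g k := by
  have : ∀ j, (if k = j then (0:ℝ) else g j) = g j - (if k = j then g j else 0) := by
    intro j; by_cases h : k = j <;> simp [h]
  rw [Finset.sum_congr rfl (fun j _ => this j), Finset.sum_sub_distrib,
    Finset.sum_ite_eq Finset.univ k g, if_pos (Finset.mem_univ k)]

lemma sum_ite_ne' {S : Type*} [Fintype S] [DecidableEq S] (k : S) (g : S → ℝ) :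
    ∑ j, (if j = k then (0:ℝ) else g j) = (∑ j, g j) - g k := by
  have : ∀ j, (if j = k then (0:ℝ) else g j) = g j - (if j = k then g j else 0) := by
    intro j; by_cases h : j = k <;> simp [h]
  rw [Finset.sum_congr rfl (fun j _ => this j), Finset.sum_sub_distrib,
    Finset.sum_ite_eq' Finset.univ k g, if_pos (Finset.mem_univ k)]

lemma rowdist {S : Type*} [Fintype S] (T : ℝ) (r c : S → ℝ) (hT : 0 < T)
    (hr : ∀ j, 0 ≤ r j) (hc : ∀ j, 0 ≤ c j)
    (hrs : ∑ j, r j = T) (hcs : ∑ j, c j = T)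
    (hs : ∀ j, r j + c j < T) :
    ∃ y : S → S → ℝ, (∀ k j, 0 ≤ y k j) ∧ (∀ k, y k k = 0) ∧
      (∀ k, ∑ j, y k j = 1) ∧ (∀ j, ∑ k, r k * y k j = c j) := by
  classical
  set Δ : S → ℝ := fun k => T - r k - c k with hΔdef
  have hΔ : ∀ k, 0 < Δ k := fun k => by have := hs k; simp only [hΔdef]; linarith
  set Q : ℝ := ∑ k, r k * c k / Δ k with hQdef
  have hQ : 0 ≤ Q := Finset.sum_nonneg fun k _ =>
    div_nonneg (mul_nonneg (hr k) (hc k)) (hΔ k).le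
  set E : ℝ := 2 * (T + Q) with hEdef
  have hE : 0 < E := by positivity
  have hEne : E ≠ 0 := hE.ne'
  set u : S → ℝ := fun k => (T + c k - r k) / (E * Δ k) with hudef
  set v : S → ℝ := fun k => (T + r k - c k) / (E * Δ k) with hvdef
  have hu : ∀ k, 0 ≤ u k := fun k =>
    div_nonneg (by have := hs k; have := hc k; linarith) (mul_pos hE (hΔ k)).le
  have hv : ∀ k, 0 ≤ v k := fun k =>
    div_nonneg (by have := hs k; have := hr k; linarith) (mul_pos hE (hΔ k)).le
  have K1 : ∀ k, u k * (T - c k) - c k * v k = T / E := by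
    intro k
    have h1 : Δ k ≠ 0 := (hΔ k).ne'
    have hkey : (T + c k - r k) * (T - c k) - c k * (T + r k - c k) = T * Δ k := by
      simp only [hΔdef]; ring
    calc u k * (T - c k) - c k * v k
        = ((T + c k - r k) * (T - c k) - c k * (T + r k - c k)) / (E * Δ k) := by
          simp only [hudef, hvdef]; ring
      _ = T * Δ k / (E * Δ k) := by rw [hkey]
      _ = T / E := by rw [mul_comm T (Δ k), mul_comm E (Δ k), mul_div_mul_left _ _ h1]
  have K1' : ∀ k, v k * (T - r k) - r k * u k = T / E := by
    intro k
    have h1 : Δ k ≠ 0 := (hΔ k).ne'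
    have hkey : (T + r k - c k) * (T - r k) - r k * (T + c k - r k) = T * Δ k := by
      simp only [hΔdef]; ring
    calc v k * (T - r k) - r k * u k
        = ((T + r k - c k) * (T - r k) - r k * (T + c k - r k)) / (E * Δ k) := by
          simp only [hudef, hvdef]; ring
      _ = T * Δ k / (E * Δ k) := by rw [hkey]
      _ = T / E := by rw [mul_comm T (Δ k), mul_comm E (Δ k), mul_div_mul_left _ _ h1]
  have K2 : ∑ k, c k * v k = (T + 2*Q) / E := by
    have hpt : ∀ k, c k * v k = (c k + 2 * (r k * c k / Δ k)) / E := by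
      intro k
      have h1 : Δ k ≠ 0 := (hΔ k).ne'
      have hkey : c k * (T + r k - c k) = (c k * Δ k + 2 * (r k * c k)) := by
        simp only [hΔdef]; ring
      calc c k * v k = c k * (T + r k - c k) / (E * Δ k) := by
            simp only [hvdef]; ring
        _ = (c k * Δ k + 2 * (r k * c k)) / (E * Δ k) := by rw [hkey]
        _ = (c k + 2 * (r k * c k / Δ k)) / E := by
            rw [show c k + 2 * (r k * c k / Δ k) = (c k * Δ k + 2 * (r k * c k)) / Δ k by
              field_simp, div_div, mul_comm (Δ k) E]
    rw [Finset.sum_congr rfl fun k _ => hpt k, ← Finset.sum_div,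
      Finset.sum_add_distrib, hcs, ← Finset.mul_sum, ← hQdef]
  have K2' : ∑ k, r k * u k = (T + 2*Q) / E := by
    have hpt : ∀ k, r k * u k = (r k + 2 * (r k * c k / Δ k)) / E := by
      intro k
      have h1 : Δ k ≠ 0 := (hΔ k).ne'
      have hkey : r k * (T + c k - r k) = (r k * Δ k + 2 * (r k * c k)) := by
        simp only [hΔdef]; ring
      calc r k * u k = r k * (T + c k - r k) / (E * Δ k) := by
            simp only [hudef]; ring
        _ = (r k * Δ k + 2 * (r k * c k)) / (E * Δ k) := by rw [hkey]
        _ = (r k + 2 * (r k * c k / Δ k)) / E := by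
            rw [show r k + 2 * (r k * c k / Δ k) = (r k * Δ k + 2 * (r k * c k)) / Δ k by
              field_simp, div_div, mul_comm (Δ k) E]
    rw [Finset.sum_congr rfl fun k _ => hpt k, ← Finset.sum_div,
      Finset.sum_add_distrib, hrs, ← Finset.mul_sum, ← hQdef]
  have hsum1 : T / E + (T + 2*Q)/E = 1 := by
    rw [← add_div, hEdef]
    field_simp
    ring
  refine ⟨fun k j => if k = j then 0 else c j * (u k + v j), fun k j => ?_, fun k => by simp,
    fun k => ?_, fun j => ?_⟩
  · by_cases h : k = j
    · simp [h]
    · simp only [if_neg h]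
      exact mul_nonneg (hc j) (add_nonneg (hu k) (hv j))
  · rw [sum_ite_ne k (fun j => c j * (u k + v j))]
    have hexp : ∑ j, c j * (u k + v j) = (∑ j, c j) * u k + ∑ j, c j * v j := by
      rw [Finset.sum_mul, ← Finset.sum_add_distrib]
      exact Finset.sum_congr rfl fun j _ => by ring
    rw [hexp, hcs, K2]
    linear_combination (K1 k) + hsum1
  · have hpt : ∀ k, r k * (if k = j then (0:ℝ) else c j * (u k + v j))
        = (if k = j then (0:ℝ) else r k * c j * (u k + v j)) := by
      intro k; by_cases h : k = j
      · simp [h]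
      · simp only [if_neg h]; ring
    rw [Finset.sum_congr rfl fun k _ => hpt k,
      sum_ite_ne' j (fun k => r k * c j * (u k + v j))]
    have hexp : ∑ k, r k * c j * (u k + v j)
        = (∑ k, r k * u k) * c j + (∑ k, r k) * (c j * v j) := by
      rw [Finset.sum_mul, Finset.sum_mul, ← Finset.sum_add_distrib]
      exact Finset.sum_congr rfl fun k _ => by ring
    rw [hexp, K2', hrs]
    linear_combination c j * (K1' j) + c j * hsum1

lemma bound_aux (θ ρ x : ℝ) (hθ0 : 0 < θ) (hθ1 : θ ≤ 1/2) (hρ1 : 1 - θ < ρ) (hρ2 : ρ < 1)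
    (hx1 : x ≤ 1 - θ) :
    (min (ρ / θ) 1 - min ((ρ - x) / θ) 1) / (min (ρ / θ) 1 - min ((ρ - 1 + θ) / θ) 1)
      ≤ max 0 ((x - ρ + 1 - θ) / (2 - 2 * θ - ρ)) := by
  have hD : (0:ℝ) < 2 - 2*θ - ρ := by linarith
  have e1 : min (ρ / θ) 1 = 1 := min_eq_right (by rw [le_div_iff₀ hθ0]; linarith)
  have e2 : min ((ρ - 1 + θ) / θ) 1 = (ρ - 1 + θ)/θ := min_eq_left (by rw [div_le_one hθ0]; linarith)
  have hd1 : 1 - (ρ - 1 + θ)/θ = (1-ρ)/θ := by field_simp; ring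
  rw [e1, e2, hd1]
  rcases le_or_gt θ (ρ - x) with hcase | hcase
  · have e4 : min ((ρ - x)/θ) 1 = 1 := min_eq_right (by rw [le_div_iff₀ hθ0]; linarith)
    rw [e4, sub_self, zero_div]; exact le_max_left _ _
  · have e4 : min ((ρ - x)/θ) 1 = (ρ - x)/θ := min_eq_left (by rw [div_le_one hθ0]; linarith)
    rw [e4, div_le_iff₀ (div_pos (by linarith) hθ0)]
    refine le_trans ?_ (mul_le_mul_of_nonneg_right
      (le_max_right 0 ((x - ρ + 1 - θ) / (2 - 2 * θ - ρ))) (div_pos (by linarith) hθ0).le)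
    rw [div_mul_div_comm, le_div_iff₀ (by positivity : (0:ℝ) < (2 - 2*θ - ρ)*θ)]
    have expand : (1 - (ρ - x)/θ) * ((2 - 2*θ - ρ)*θ) = (θ - ρ + x)*(2 - 2*θ - ρ) := by
      field_simp; ring
    rw [expand]
    nlinarith [mul_nonneg (by linarith : (0:ℝ) ≤ 1 - 2*θ) (by linarith : (0:ℝ) ≤ 1 - θ - x)]

set_option maxHeartbeats 1000000 in
/-- LP feasibility lemma for the reduction in the analysis of Stochastic SWOR, with the
match-rate function `p(x) = min(x/θ, 1)`. -/
theorem lp_feasibility {S : Type*} [Fintype S] (θ lam ρ : ℝ)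
    (hθ0 : 0 < θ) (hθ1 : θ ≤ 1/2) (hlam : 0 < lam)
    (hρ1 : 1 - θ < ρ) (hρ2 : ρ < 1)
    (ρj : S → ℝ) (hρj : ∀ j, ρj j ∈ Set.Icc (0:ℝ) (1 - θ))
    (hsum : ∑ j, ρj j = ρ) :
    ∃ (lamj : S → ℝ) (ρjk : S → S → ℝ),
      (∀ j, 0 ≤ lamj j) ∧
      (∀ j k, 0 ≤ ρjk j k) ∧
      (∑ j, lamj j = lam) ∧
      (∀ j, ∑ k, ρjk j k = ρ) ∧
      (∀ j, ρjk j j = 1 - θ) ∧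
      (∀ j, ∑ k, lamj k * ρjk k j = lam * ρj j) ∧
      (∀ j, lam * max
          ((min (ρ / θ) 1 - min ((ρ - ρj j) / θ) 1) /
            (min (ρ / θ) 1 - min ((ρ - 1 + θ) / θ) 1))
          ((ρj j - ρ + 1 - θ) / (2 - 2 * θ - ρ)) ≤ lamj j) := by
  classical
  have h1θ : (0:ℝ) < 1 - θ := by linarith
  have ht : (0:ℝ) < ρ - 1 + θ := by linarith
  have hD : (0:ℝ) < 2 - 2*θ - ρ := by linarith
  set m : S → ℝ := fun j => max 0 ((ρj j - ρ + 1 - θ) / (2 - 2 * θ - ρ)) with hmdef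
  have hm0 : ∀ j, 0 ≤ m j := fun j => le_max_left _ _
  have hmge : ∀ j, (ρj j - ρ + 1 - θ) / (2 - 2 * θ - ρ) ≤ m j := fun j => le_max_right _ _
  have hbound : ∀ j, max
      ((min (ρ / θ) 1 - min ((ρ - ρj j) / θ) 1) /
        (min (ρ / θ) 1 - min ((ρ - 1 + θ) / θ) 1))
      ((ρj j - ρ + 1 - θ) / (2 - 2 * θ - ρ)) ≤ m j := by
    intro j
    exact max_le (bound_aux θ ρ (ρj j) hθ0 hθ1 hρ1 hρ2 (hρj j).2) (hmge j)
  -- final assembly helper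
  have final : ∀ lamj : S → ℝ, (∀ j, lam * m j ≤ lamj j) →
      (∀ j, lam * max
          ((min (ρ / θ) 1 - min ((ρ - ρj j) / θ) 1) /
            (min (ρ / θ) 1 - min ((ρ - 1 + θ) / θ) 1))
          ((ρj j - ρ + 1 - θ) / (2 - 2 * θ - ρ)) ≤ lamj j) := by
    intro lamj hl j
    exact le_trans (mul_le_mul_of_nonneg_left (hbound j) hlam.le) (hl j)
  by_cases hσ : ∑ j, m j < 1
  · -- main (interior) case
    have hρdiv : 1 < ρ / (1-θ) := (one_lt_div h1θ).mpr (by linarith)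
    set H : ℝ := ρ/(1-θ) - ∑ j, m j with hHdef
    have hσpos : 0 < 1 - ∑ j, m j := by linarith
    have hσH : 1 - ∑ j, m j < H := by simp only [hHdef]; linarith
    have hH : 0 < H := lt_trans hσpos hσH
    set h : S → ℝ := fun j => ρj j/(1-θ) - m j with hhdef
    have hh0 : ∀ j, 0 ≤ h j := by
      intro j
      obtain ⟨hj0, hj1⟩ := hρj j
      simp only [hhdef, hmdef, sub_nonneg, max_le_iff]
      constructor
      · positivity
      · rw [div_le_div_iff₀ hD h1θ]
        nlinarith [mul_nonneg ht.le (sub_nonneg.mpr hj1)]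
    have hhsum : ∑ j, h j = H := by
      simp only [hhdef]
      rw [Finset.sum_sub_distrib, ← Finset.sum_div, hsum, hHdef]
    set lamj : S → ℝ := fun j => lam * (m j + (1 - ∑ k, m k) * h j / H) with hljdef
    have hX0 : ∀ j, 0 ≤ (1 - ∑ k, m k) * h j / H :=
      fun j => div_nonneg (mul_nonneg hσpos.le (hh0 j)) hH.le
    have hlj0 : ∀ j, 0 ≤ lamj j :=
      fun j => mul_nonneg hlam.le (add_nonneg (hm0 j) (hX0 j))
    have hljsum : ∑ j, lamj j = lam := by
      simp only [hljdef]
      rw [← Finset.mul_sum]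
      have e : ∑ j, (m j + (1 - ∑ k, m k) * h j / H)
          = ∑ j, m j + (1 - ∑ k, m k) * (∑ j, h j) / H := by
        rw [Finset.sum_add_distrib]
        congr 1
        rw [← Finset.sum_div, ← Finset.mul_sum]
      rw [e, hhsum, mul_div_assoc, div_self hH.ne', mul_one]
      ring
    have hlam_ge : ∀ j, lam * m j ≤ lamj j := by
      intro j
      simp only [hljdef]
      exact mul_le_mul_of_nonneg_left (le_add_of_nonneg_right (hX0 j)) hlam.le
    have hXh : ∀ j, (1 - ∑ k, m k) * h j / H ≤ h j := by
      intro j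
      rw [div_le_iff₀ hH]
      nlinarith [mul_nonneg (hh0 j) (by linarith : (0:ℝ) ≤ H - (1 - ∑ k, m k))]
    have hmh : ∀ j, m j + h j = ρj j / (1-θ) := by
      intro j; simp only [hhdef]; ring
    have hc0 : ∀ j, 0 ≤ lam * ρj j - lamj j * (1-θ) := by
      intro j
      have h2 : lamj j ≤ lam * (ρj j / (1-θ)) := by
        simp only [hljdef]
        rw [← hmh j]
        exact mul_le_mul_of_nonneg_left (by linarith [hXh j]) hlam.le
      have h3 : lam * (ρj j/(1-θ)) * (1-θ) = lam * ρj j := by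
        field_simp
      nlinarith [mul_le_mul_of_nonneg_right h2 h1θ.le]
    have hstrict : ∀ j, lamj j * (ρ-1+θ) + (lam * ρj j - lamj j * (1-θ)) < lam * (ρ-1+θ) := by
      intro j
      obtain ⟨hj0, hj1⟩ := hρj j
      rcases eq_or_lt_of_le hj0 with h0 | h0
      · have : lam * ρj j = 0 := by rw [← h0, mul_zero]
        nlinarith [mul_nonneg (hlj0 j) hD.le, mul_pos hlam ht, mul_nonneg (hlj0 j) ht.le,
          mul_nonneg (hlj0 j) h1θ.le]
      · have hjlt : ρj j < 1 - θ := by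
          rcases eq_or_lt_of_le hj1 with he | hlt
          · exfalso
            have hm1 : m j = 1 := by
              simp only [hmdef, he]
              rw [show (1 - θ - ρ + 1 - θ) / (2 - 2 * θ - ρ) = 1 by
                rw [div_eq_one_iff_eq hD.ne']; ring]
              simp
            have := Finset.single_le_sum (f := m) (fun i _ => hm0 i) (Finset.mem_univ j)
            rw [hm1] at this
            linarith
          · exact hlt
        have hhj : 0 < h j := by
          simp only [hhdef, hmdef, sub_pos, max_lt_iff]
          constructor
          · positivity
          · rw [div_lt_div_iff₀ hD h1θ]
            nlinarith [mul_pos ht (by linarith : (0:ℝ) < 1 - θ - ρj j)]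
        have hpos : 0 < (1 - ∑ k, m k) * h j / H := div_pos (mul_pos hσpos hhj) hH
        have h4 : lam * m j < lamj j := by
          simp only [hljdef]
          nlinarith
        have h5 : lam * ((ρj j - ρ + 1 - θ)/(2 - 2*θ - ρ)) ≤ lam * m j :=
          mul_le_mul_of_nonneg_left (hmge j) hlam.le
        have h7 : lam * (ρj j - ρ + 1 - θ) < lamj j * (2 - 2*θ - ρ) := by
          calc lam * (ρj j - ρ + 1 - θ)
              = lam * ((ρj j - ρ + 1 - θ)/(2 - 2*θ - ρ)) * (2 - 2*θ - ρ) := by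
                rw [mul_assoc, div_mul_cancel₀ _ hD.ne']
            _ ≤ lam * m j * (2 - 2*θ - ρ) := mul_le_mul_of_nonneg_right h5 hD.le
            _ < lamj j * (2 - 2*θ - ρ) := mul_lt_mul_of_pos_right h4 hD
        linarith [h7]
    have hrs : ∑ j, lamj j * (ρ-1+θ) = lam*(ρ-1+θ) := by
      rw [← Finset.sum_mul, hljsum]
    have hcs : ∑ j, (lam * ρj j - lamj j * (1-θ)) = lam*(ρ-1+θ) := by
      rw [Finset.sum_sub_distrib, ← Finset.mul_sum, hsum, ← Finset.sum_mul, hljsum]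
      ring
    obtain ⟨y, hy0, hyd, hyr, hyc⟩ := rowdist (lam*(ρ-1+θ)) (fun j => lamj j * (ρ-1+θ))
      (fun j => lam * ρj j - lamj j * (1-θ)) (mul_pos hlam ht)
      (fun j => mul_nonneg (hlj0 j) ht.le) hc0 hrs hcs hstrict
    refine ⟨lamj, fun j k => (if j = k then 1-θ else 0) + (ρ-1+θ) * y j k,
      hlj0, ?_, hljsum, ?_, ?_, ?_, final lamj hlam_ge⟩
    · intro j k
      refine add_nonneg ?_ (mul_nonneg ht.le (hy0 j k))
      by_cases hjk : j = k <;> simp [hjk, h1θ.le]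
    · intro j
      rw [Finset.sum_add_distrib, ← Finset.mul_sum, hyr j,
        Finset.sum_ite_eq Finset.univ j (fun _ => 1-θ), if_pos (Finset.mem_univ j)]
      ring
    · intro j
      simp [hyd j]
    · intro j
      have hpt : ∀ k, lamj k * ((if k = j then 1-θ else 0) + (ρ-1+θ) * y k j)
          = (if k = j then lamj k * (1-θ) else 0) + (lamj k * (ρ-1+θ)) * y k j := by
        intro k
        by_cases hk : k = j
        · simp only [if_pos hk]; ring
        · simp only [if_neg hk]; ring
      rw [Finset.sum_congr rfl fun k _ => hpt k, Finset.sum_add_distrib,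
        Finset.sum_ite_eq' Finset.univ j (fun k => lamj k * (1-θ)),
        if_pos (Finset.mem_univ j), hyc j]
      ring
  · -- tight case
    push_neg at hσ
    set A : Finset S := Finset.univ.filter (fun j => ρ - 1 + θ < ρj j) with hAdef
    have hmem : ∀ j, j ∈ A ↔ ρ - 1 + θ < ρj j := by
      intro j; simp [hAdef]
    have hmA' : ∀ j, j ∉ A → m j = 0 := by
      intro j hj
      rw [hmem] at hj
      push_neg at hj
      simp only [hmdef]
      exact max_eq_left (div_nonpos_iff.mpr (Or.inr ⟨by linarith, hD.le⟩))
    have hsumA : ∑ j, m j = (∑ j ∈ A, (ρj j - ρ + 1 - θ))/(2 - 2*θ - ρ) := by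
      rw [← Finset.sum_subset (Finset.subset_univ A) (fun j _ hj => hmA' j hj)]
      rw [Finset.sum_div]
      refine Finset.sum_congr rfl fun j hj => ?_
      rw [hmem] at hj
      simp only [hmdef]
      exact max_eq_right (le_of_lt (div_pos (by linarith) hD))
    have hDle : (2 - 2*θ - ρ) ≤ ∑ j ∈ A, (ρj j - ρ + 1 - θ) := by
      rw [hsumA] at hσ
      exact (one_le_div hD).mp hσ
    have hAsub : ∑ j ∈ A, ρj j ≤ ρ := by
      rw [← hsum]
      exact Finset.sum_le_sum_of_subset_of_nonneg (Finset.subset_univ A)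
        (fun j _ _ => (hρj j).1)
    have hsplit : ∑ j ∈ A, (ρj j - ρ + 1 - θ)
        = ∑ j ∈ A, ρj j - (A.card : ℝ) * (ρ - 1 + θ) := by
      rw [Finset.sum_congr rfl (fun j (_ : j ∈ A) => show ρj j - ρ + 1 - θ = ρj j - (ρ-1+θ) by ring),
        Finset.sum_sub_distrib, Finset.sum_const, nsmul_eq_mul]
    have hAne : A.Nonempty := by
      rw [Finset.nonempty_iff_ne_empty]
      intro hA
      rw [hA, Finset.sum_empty] at hDle
      linarith
    have hA2 : A.card ≤ 2 := by
      by_contra hc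
      push_neg at hc
      have hc3 : (3:ℝ) ≤ (A.card : ℝ) := by exact_mod_cast hc
      rw [hsplit] at hDle
      nlinarith
    have hcard : A.card = 1 ∨ A.card = 2 := by
      have := Finset.Nonempty.card_pos hAne
      omega
    rcases hcard with h1 | h2
    · -- case (i): one index with ρj = 1 - θ
      obtain ⟨j0, hj0⟩ := Finset.card_eq_one.mp h1
      have hsA : ∑ j ∈ A, (ρj j - ρ + 1 - θ) = ρj j0 - ρ + 1 - θ := by
        rw [hj0, Finset.sum_singleton]
      rw [hsA] at hDle
      have hjstar : ρj j0 = 1 - θ := le_antisymm (hρj j0).2 (by linarith)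
      refine ⟨fun j => if j = j0 then lam else 0,
        fun j k => if j = k then 1-θ else (if j = j0 then ρj k else if k = j0 then ρ-1+θ else 0),
        ?_, ?_, ?_, ?_, ?_, ?_, final _ ?_⟩
      · intro j
        by_cases hj : j = j0 <;> simp [hj, hlam.le]
      · intro j k
        by_cases h1' : j = k
        · simp [h1', h1θ.le]
        · by_cases h2' : j = j0
          · simp only [if_neg h1', if_pos h2']
            exact (hρj k).1
          · by_cases h3' : k = j0 <;> simp [h1', h2', h3', ht.le]
      · rw [Finset.sum_ite_eq' Finset.univ j0 (fun _ => lam), if_pos (Finset.mem_univ j0)]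
      · intro j
        by_cases hj : j = j0
        · subst hj
          have hpt : ∀ k, (if j = k then 1-θ else (if j = j then ρj k else if k = j then ρ-1+θ else 0))
              = ρj k + (if j = k then (1-θ) - ρj k else 0) := by
            intro k
            by_cases hk : j = k
            · simp [hk]
            · simp [hk]
          rw [Finset.sum_congr rfl fun k _ => hpt k, Finset.sum_add_distrib, hsum,
            Finset.sum_ite_eq Finset.univ j (fun k => (1-θ) - ρj k), if_pos (Finset.mem_univ j),
            hjstar]
          ring
        · have hpt : ∀ k, (if j = k then 1-θ else (if j = j0 then ρj k else if k = j0 then ρ-1+θ else 0))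
              = (if j = k then 1-θ else 0) + (if k = j0 then ρ-1+θ else 0) := by
            intro k
            by_cases hk : j = k
            · have : ¬ (k = j0) := by rw [← hk]; exact hj
              simp [hk, this]
            · simp [hk, hj]
          rw [Finset.sum_congr rfl fun k _ => hpt k, Finset.sum_add_distrib,
            Finset.sum_ite_eq Finset.univ j (fun _ => 1-θ), if_pos (Finset.mem_univ j),
            Finset.sum_ite_eq' Finset.univ j0 (fun _ => ρ-1+θ), if_pos (Finset.mem_univ j0)]
          ring
      · intro j
        simp
      · intro j
        have hpt : ∀ k, (if k = j0 then lam else 0) *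
            (if k = j then 1-θ else (if k = j0 then ρj j else if j = j0 then ρ-1+θ else 0))
            = (if k = j0 then lam * (if k = j then 1-θ else (if k = j0 then ρj j else if j = j0 then ρ-1+θ else 0)) else 0) := by
          intro k
          by_cases hk : k = j0 <;> simp [hk]
        rw [Finset.sum_congr rfl fun k _ => hpt k,
          Finset.sum_ite_eq' Finset.univ j0
            (fun k => lam * (if k = j then 1-θ else (if k = j0 then ρj j else if j = j0 then ρ-1+θ else 0))),
          if_pos (Finset.mem_univ j0)]
        by_cases hj : j0 = j
        · rw [if_pos hj, ← hj, hjstar]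
        · rw [if_neg hj, if_pos rfl]
      · intro j
        by_cases hj : j = j0
        · subst hj
          have hm1 : m j = 1 := by
            simp only [hmdef, hjstar]
            rw [show (1 - θ - ρ + 1 - θ) / (2 - 2 * θ - ρ) = 1 by
              rw [div_eq_one_iff_eq hD.ne']; ring]
            simp
          rw [hm1, if_pos rfl, mul_one]
        · have hjA : j ∉ A := by
            intro hjA
            rw [hj0, Finset.mem_singleton] at hjA
            exact hj hjA
          rw [hmA' j hjA, if_neg hj, mul_zero]
    · -- case (ii): two indices carrying everything
      obtain ⟨j1, j2, hne, hA12⟩ := Finset.card_eq_two.mp h2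
      have hsA : ∑ j ∈ A, (ρj j - ρ + 1 - θ) = (ρj j1 - ρ + 1 - θ) + (ρj j2 - ρ + 1 - θ) := by
        rw [hA12, Finset.sum_pair hne]
      have hAsum' : ∑ j ∈ A, ρj j = ρj j1 + ρj j2 := by
        rw [hA12, Finset.sum_pair hne]
      rw [hsA] at hDle
      have hsum2 : ρj j1 + ρj j2 = ρ := by
        have h' := hAsub
        rw [hAsum'] at h'
        linarith
      have hzero : ∀ j, j ≠ j1 → j ≠ j2 → ρj j = 0 := by
        intro j hj1 hj2
        have hsdiff : ∑ k ∈ Finset.univ \ A, ρj k = 0 := by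
          have h' := Finset.sum_sdiff (f := ρj) (Finset.subset_univ A)
          rw [hsum, hAsum'] at h'
          linarith
        have hjmem : j ∈ Finset.univ \ A := by
          rw [Finset.mem_sdiff, hA12]
          exact ⟨Finset.mem_univ j, by simp [hj1, hj2]⟩
        have := (Finset.sum_eq_zero_iff_of_nonneg (fun k _ => (hρj k).1)).mp hsdiff j hjmem
        linarith
      set L1 : ℝ := lam * ((1 - θ - ρj j2)/(2 - 2*θ - ρ)) with hL1def
      set L2 : ℝ := lam * ((1 - θ - ρj j1)/(2 - 2*θ - ρ)) with hL2def
      have hL10 : 0 ≤ L1 := mul_nonneg hlam.le (div_nonneg (by linarith [(hρj j2).2]) hD.le)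
      have hL20 : 0 ≤ L2 := mul_nonneg hlam.le (div_nonneg (by linarith [(hρj j1).2]) hD.le)
      set τ : S → S := fun j => if j = j1 then j2 else j1 with hτdef
      have hτne : ∀ j, τ j ≠ j := by
        intro j
        by_cases hj : j = j1
        · simp only [hτdef, if_pos hj, hj]
          exact fun hc => hne hc.symm
        · simp only [hτdef, if_neg hj]
          exact fun hc => hj hc.symm
      have hτ1 : τ j1 = j2 := by simp [hτdef]
      have hτ2 : τ j2 = j1 := by simp [hτdef, hne]
      set B : S → S → ℝ := fun j k => if j = k then 1-θ else if k = τ j then ρ-1+θ else 0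
        with hBdef
      have hBnn : ∀ j k, 0 ≤ B j k := by
        intro j k
        simp only [hBdef]
        split_ifs
        · linarith
        · linarith
        · exact le_refl 0
      have hBd : ∀ j, B j j = 1-θ := by intro j; simp [hBdef]
      have hBτ : ∀ j, B j (τ j) = ρ-1+θ := by
        intro j
        have h1' : ¬ j = τ j := fun hc => (hτne j) hc.symm
        simp only [hBdef]
        rw [if_neg h1']
        simp
      have hB0 : ∀ j k, j ≠ k → k ≠ τ j → B j k = 0 := by
        intro j k h1' h2'
        simp only [hBdef, if_neg h1', if_neg h2']
      have hBrow : ∀ j, ∑ k, B j k = ρ := by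
        intro j
        have hpt : ∀ k, B j k = (if j = k then 1-θ else 0) + (if k = τ j then ρ-1+θ else 0) := by
          intro k
          simp only [hBdef]
          by_cases hk : j = k
          · have hk2 : ¬ (k = τ j) := by
              rw [← hk]
              exact fun hc => (hτne j) hc.symm
            rw [if_pos hk, if_pos hk, if_neg hk2, add_zero]
          · rw [if_neg hk, if_neg hk, zero_add]
        rw [Finset.sum_congr rfl fun k _ => hpt k, Finset.sum_add_distrib,
          Finset.sum_ite_eq Finset.univ j (fun _ => 1-θ), if_pos (Finset.mem_univ j),
          Finset.sum_ite_eq' Finset.univ (τ j) (fun _ => ρ-1+θ), if_pos (Finset.mem_univ (τ j))]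
        ring
      set lamjf : S → ℝ := fun j => if j = j1 then L1 else if j = j2 then L2 else 0 with hlfdef
      have hlf1 : lamjf j1 = L1 := by simp [hlfdef]
      have hlf2 : lamjf j2 = L2 := by
        simp only [hlfdef]
        rw [if_neg (fun hc : j2 = j1 => hne hc.symm)]
        simp
      have hlf0 : ∀ j, j ≠ j1 → j ≠ j2 → lamjf j = 0 := by
        intro j hj1 hj2
        simp [hlfdef, hj1, hj2]
      refine ⟨lamjf, B, ?_, hBnn, ?_, hBrow, hBd, ?_, final _ ?_⟩
      · intro j
        by_cases hj : j = j1
        · rw [hj, hlf1]; exact hL10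
        · by_cases hj' : j = j2
          · rw [hj', hlf2]; exact hL20
          · rw [hlf0 j hj hj']
      · have hpt : ∀ j, lamjf j = (if j = j1 then L1 else 0) + (if j = j2 then L2 else 0) := by
          intro j
          simp only [hlfdef]
          by_cases hj : j = j1
          · have hj' : ¬ (j = j2) := by rw [hj]; exact hne
            rw [if_pos hj, if_pos hj, if_neg hj', add_zero]
          · rw [if_neg hj, if_neg hj, zero_add]
        rw [Finset.sum_congr rfl fun j _ => hpt j, Finset.sum_add_distrib,
          Finset.sum_ite_eq' Finset.univ j1 (fun _ => L1),
          Finset.sum_ite_eq' Finset.univ j2 (fun _ => L2),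
          if_pos (Finset.mem_univ j1), if_pos (Finset.mem_univ j2), hL1def, hL2def,
          show ρj j2 = ρ - ρj j1 by linarith]
        field_simp
        linear_combination (1) * mul_inv_cancel₀ (show (0:ℝ) < 2 - θ * 2 - ρ by linarith).ne'
      · intro j
        have hpt : ∀ k, lamjf k * B k j
            = (if k = j1 then L1 * B k j else 0) + (if k = j2 then L2 * B k j else 0) := by
          intro k
          simp only [hlfdef]
          by_cases hk : k = j1
          · have hk' : ¬ (k = j2) := by rw [hk]; exact hne
            rw [if_pos hk, if_pos hk, if_neg hk', add_zero]
          · rw [if_neg hk, if_neg hk, zero_add]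
            by_cases hk' : k = j2
            · rw [if_pos hk', if_pos hk']
            · rw [if_neg hk', if_neg hk', zero_mul]
        rw [Finset.sum_congr rfl fun k _ => hpt k, Finset.sum_add_distrib,
          Finset.sum_ite_eq' Finset.univ j1 (fun k => L1 * B k j),
          Finset.sum_ite_eq' Finset.univ j2 (fun k => L2 * B k j),
          if_pos (Finset.mem_univ j1), if_pos (Finset.mem_univ j2)]
        by_cases hj : j = j1
        · rw [hj, hBd j1, ← hτ2, hBτ j2, hτ2, hL1def, hL2def,
            show ρj j2 = ρ - ρj j1 by linarith]
          field_simp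
          linear_combination (ρj j1) * mul_inv_cancel₀ (show (0:ℝ) < 2 - θ * 2 - ρ by linarith).ne'
        · by_cases hj' : j = j2
          · rw [hj', ← hτ1, hBτ j1, hτ1, hBd j2, hL1def, hL2def,
              show ρj j1 = ρ - ρj j2 by linarith]
            field_simp
            linear_combination (ρj j2) * mul_inv_cancel₀ (show (0:ℝ) < 2 - θ * 2 - ρ by linarith).ne'
          · rw [hB0 j1 j (fun hc => hj hc.symm) (by rw [hτ1]; exact hj'),
              hB0 j2 j (fun hc => hj' hc.symm) (by rw [hτ2]; exact hj),
              hzero j hj hj']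
            ring
      · intro j
        by_cases hj : j = j1
        · subst hj
          have hjA : j ∈ A := by rw [hA12]; exact Finset.mem_insert_self _ _
          rw [hmem] at hjA
          have hmj : m j = (ρj j - ρ + 1 - θ) / (2 - 2*θ - ρ) := by
            simp only [hmdef]
            exact max_eq_right (le_of_lt (div_pos (by linarith) hD))
          rw [hmj, hlf1, hL1def, show ρj j - ρ + 1 - θ = 1 - θ - ρj j2 by linarith]
        · by_cases hj' : j = j2
          · subst hj'
            have hjA : j ∈ A := by
              rw [hA12]
              exact Finset.mem_insert_of_mem (Finset.mem_singleton_self _)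
            rw [hmem] at hjA
            have hmj : m j = (ρj j - ρ + 1 - θ) / (2 - 2*θ - ρ) := by
              simp only [hmdef]
              exact max_eq_right (le_of_lt (div_pos (by linarith) hD))
            rw [hmj, hlf2, hL2def, show ρj j - ρ + 1 - θ = 1 - θ - ρj j1 by linarith]
          · have hjA : j ∉ A := by
              rw [hA12]
              simp [hj, hj']
            rw [hmA' j hjA, hlf0 j hj hj', mul_zero]
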